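/- Define φ(x', z_n) = ⟨x'⟩ ψ_ε(z_n/⟨x'⟩) for (x', z_n) ∈ ℝ^{n−1} × {Im ≥ 0}, where ψ_ε(z) = ∫_{−∞}^0 η(t) e^{−iεtz} dt − iz with η as above and ε > 0 small. Then ⟨x'⟩ + |z_n| ∼ |φ(x', z_n)| uniformly in (x', z_n), i.e. there are constants c, C > 0 with c(⟨x'⟩ + |z_n|) ≤ |φ(x', z_n)| ≤ C(⟨x'⟩ + |z_n|). -/

import Mathlib

open MeasureTheory Complex

/-- `ψ_ε(z) = ∫_{−∞}^0 η(t) e^{−iεtz} dt − iz`. -/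
noncomputable def psiEps (η : ℝ → ℝ) (ε : ℝ) (z : ℂ) : ℂ :=
  (∫ t in Set.Iic (0 : ℝ), (η t : ℂ) * Complex.exp (-Complex.I * ε * t * z)) -
    Complex.I * z

/-- The Japanese bracket `⟨x'⟩ = (1 + |x'|²)^{1/2}`. -/
noncomputable def brak {k : ℕ} (x' : EuclideanSpace ℝ (Fin k)) : ℝ :=
  Real.sqrt (1 + ‖x'‖ ^ 2)

/-- `φ(x', z_n) = ⟨x'⟩ ψ_ε(z_n/⟨x'⟩)`. -/
noncomputable def phiSym {k : ℕ} (η : ℝ → ℝ) (ε : ℝ)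
    (x' : EuclideanSpace ℝ (Fin k)) (z : ℂ) : ℂ :=
  (brak x' : ℂ) * psiEps η ε (z / (brak x' : ℂ))

lemma normA_le (η : SchwartzMap ℝ ℝ)
    (hη₀ : ∀ t, 0 ≤ η t)
    (hηsupp : ∀ t, η t ≠ 0 → t ∈ Set.Ioo (-2 : ℝ) (-1))
    (hηint : (∫ t : ℝ, η t) = 2)
    (ε : ℝ) (hε : 0 < ε) (z : ℂ) (hz : 0 ≤ z.im) :
    ‖∫ t in Set.Iic (0 : ℝ),
      (η t : ℂ) * Complex.exp (-Complex.I * ε * t * z)‖ ≤ 2 := by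
  have h1 : ‖∫ t in Set.Iic (0 : ℝ),
      (η t : ℂ) * Complex.exp (-Complex.I * ε * t * z)‖
      ≤ ∫ t in Set.Iic (0 : ℝ), ‖(η t : ℂ) * Complex.exp (-Complex.I * ε * t * z)‖ :=
    norm_integral_le_integral_norm _
  have h2 : ∫ t in Set.Iic (0 : ℝ), ‖(η t : ℂ) * Complex.exp (-Complex.I * ε * t * z)‖
      ≤ ∫ t in Set.Iic (0 : ℝ), η t := by
    refine integral_mono_of_nonneg ?_ (η.integrable.restrict) ?_
    · filter_upwards with t using norm_nonneg _
    · filter_upwards [ae_restrict_mem measurableSet_Iic] with t ht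
      have hre : (-Complex.I * ε * t * z).re = ε * t * z.im := by
        simp [Complex.mul_re, Complex.mul_im]
      rw [norm_mul, Complex.norm_real, Real.norm_eq_abs, Complex.norm_exp, hre]
      have hexp : Real.exp (ε * t * z.im) ≤ 1 := by
        rw [Real.exp_le_one_iff]
        have : ε * t ≤ 0 := mul_nonpos_of_nonneg_of_nonpos hε.le ht
        exact mul_nonpos_of_nonpos_of_nonneg this hz
      have := hη₀ t
      calc |η t| * Real.exp (ε * t * z.im) ≤ |η t| * 1 := by
            exact mul_le_mul_of_nonneg_left hexp (abs_nonneg _)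
        _ = η t := by rw [mul_one, _root_.abs_of_nonneg this]
  have h3 : ∫ t in Set.Iic (0 : ℝ), η t = ∫ t : ℝ, η t := by
    refine setIntegral_eq_integral_of_forall_compl_eq_zero fun t ht => ?_
    by_contra h
    have := hηsupp t h
    simp only [Set.mem_Iic, not_le] at ht
    linarith [this.2]
  calc ‖∫ t in Set.Iic (0 : ℝ), (η t : ℂ) * Complex.exp (-Complex.I * ε * t * z)‖
      ≤ ∫ t in Set.Iic (0 : ℝ), η t := le_trans h1 h2
    _ = 2 := by rw [h3, hηint]

lemma psi_bounds (η : SchwartzMap ℝ ℝ)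
    (hη₀ : ∀ t, 0 ≤ η t)
    (hηsupp : ∀ t, η t ≠ 0 → t ∈ Set.Ioo (-2 : ℝ) (-1))
    (hηint : (∫ t : ℝ, η t) = 2)
    (ε : ℝ) (hε : 0 < ε) (z : ℂ) (hz : 0 ≤ z.im) :
    ‖z‖ - 2 ≤ ‖psiEps (⇑η) ε z‖ ∧
      ‖psiEps (⇑η) ε z‖ ≤ ‖z‖ + 2 := by
  set A := ∫ t in Set.Iic (0 : ℝ), ((η t : ℂ)) * Complex.exp (-Complex.I * ε * t * z) with hA
  have hAle : ‖A‖ ≤ 2 := normA_le η hη₀ hηsupp hηint ε hε z hz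
  have habsIz : ‖Complex.I * z‖ = ‖z‖ := by
    rw [norm_mul, Complex.norm_I, one_mul]
  constructor
  · have h := norm_sub_norm_le (Complex.I * z) A
    rw [norm_sub_rev] at h
    rw [habsIz] at h
    calc ‖z‖ - 2 ≤ ‖z‖ - ‖A‖ := by linarith
      _ ≤ ‖A - Complex.I * z‖ := h
      _ = ‖psiEps (⇑η) ε z‖ := by rw [psiEps]
  · have h := norm_sub_le A (Complex.I * z)
    rw [habsIz] at h
    calc ‖psiEps (⇑η) ε z‖ = ‖A - Complex.I * z‖ := by rw [psiEps]
      _ ≤ ‖A‖ + ‖z‖ := h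
      _ ≤ ‖z‖ + 2 := by linarith

/-- If `η` is a nonnegative Schwartz bump with support in `(−2,−1)`, `∫ η = 2`, and
`ε > 0` is small enough that `Re ψ_ε ≥ 3/2` on `{|z| ≤ 4, Im z ≥ 0}`, then
`⟨x'⟩ + |z_n| ∼ |φ(x', z_n)|` uniformly on `ℝ^{n-1} × {Im ≥ 0}`. -/
theorem phiSym_comparable {k : ℕ} (η : SchwartzMap ℝ ℝ)
    (hη₀ : ∀ t, 0 ≤ η t)
    (hηsupp : ∀ t, η t ≠ 0 → t ∈ Set.Ioo (-2 : ℝ) (-1))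
    (hηint : (∫ t : ℝ, η t) = 2)
    (ε : ℝ) (hε : 0 < ε)
    (hre : ∀ z : ℂ, 0 ≤ z.im → ‖z‖ ≤ 4 → (3 : ℝ) / 2 ≤ (psiEps (⇑η) ε z).re) :
    ∃ c C : ℝ, 0 < c ∧ 0 < C ∧
      ∀ (x' : EuclideanSpace ℝ (Fin k)) (z : ℂ), 0 ≤ z.im →
        c * (brak x' + ‖z‖) ≤ ‖phiSym (⇑η) ε x' z‖ ∧
        ‖phiSym (⇑η) ε x' z‖ ≤ C * (brak x' + ‖z‖) := by
  refine ⟨3/10, 6, by norm_num, by norm_num, fun x' z hz => ?_⟩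
  set r := brak x' with hr
  have hr1 : (1 : ℝ) ≤ r := by
    rw [hr, brak]
    nlinarith [Real.sq_sqrt (show (0:ℝ) ≤ 1 + ‖x'‖^2 by positivity),
      Real.sqrt_nonneg (1 + ‖x'‖^2), sq_nonneg ‖x'‖]
  have hr0 : (0 : ℝ) < r := lt_of_lt_of_le one_pos hr1
  set w := z / (r : ℂ) with hw
  have hwim : 0 ≤ w.im := by
    rw [hw, Complex.div_ofReal_im]
    positivity
  have hwabs : ‖w‖ = ‖z‖ / r := by
    rw [hw, norm_div, Complex.norm_real, Real.norm_eq_abs, abs_of_pos hr0]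
  have hphi : ‖phiSym (⇑η) ε x' z‖ = r * ‖psiEps (⇑η) ε w‖ := by
    rw [phiSym, norm_mul, Complex.norm_real, Real.norm_eq_abs, abs_of_pos hr0]
  obtain ⟨hlow, hup⟩ := psi_bounds η hη₀ hηsupp hηint ε hε w hwim
  have hz0 : 0 ≤ ‖z‖ := norm_nonneg z
  rw [hphi]
  by_cases hcase : ‖z‖ ≤ 4 * r
  · -- |w| ≤ 4
    have hw4 : ‖w‖ ≤ 4 := by
      rw [hwabs]; rw [div_le_iff₀ hr0]; linarith
    have hre' := hre w hwim hw4
    have habs_ge : (3 : ℝ) / 2 ≤ ‖psiEps (⇑η) ε w‖ :=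
      le_trans hre' (le_trans (le_abs_self _) (Complex.abs_re_le_norm _))
    have habs_le : ‖psiEps (⇑η) ε w‖ ≤ 6 := by linarith
    constructor
    · nlinarith
    · nlinarith
  · push_neg at hcase
    have hw4 : (4 : ℝ) ≤ ‖w‖ := by
      rw [hwabs, le_div_iff₀ hr0]; linarith
    have h1 : ‖w‖ / 2 ≤ ‖psiEps (⇑η) ε w‖ := by linarith
    have h2 : ‖psiEps (⇑η) ε w‖ ≤ 3 / 2 * ‖w‖ := by linarith
    have hrw : r * ‖w‖ = ‖z‖ := by
      rw [hwabs]; field_simp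
    constructor
    · nlinarith
    · nlinarith
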